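/- Let μ be the uniform distribution on the three standard basis vectors e₁, e₂, e₃ of ℝ³ (each with probability 1/3). Then for every C ∈ [0,1], g(C,μ) = √((1 + 2C²)/3). In particular g*(μ) = g(0,μ) = 1/√3. -/

import Mathlib

open MeasureTheory Real
open scoped ENNReal

noncomputable section

abbrev E3 := EuclideanSpace ℝ (Fin 3)

/-- The unit sphere S² in ℝ³. -/
def unitSphere : Set E3 := Metric.sphere (0 : E3) 1

/-- `g C μ` is the supremum over unit vectors `v` of `∫ √(C² + (1−C²)⟨r,v⟩²) dμ(r)`. -/
def g (C : ℝ) (μ : Measure E3) : ℝ :=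
  ⨆ v : unitSphere, ∫ r, Real.sqrt (C ^ 2 + (1 - C ^ 2) * (inner ℝ r (v : E3) : ℝ) ^ 2) ∂μ


lemma integrable_dirac'' {f : E3 → ℝ} (hf : Continuous f) (a : E3) :
    Integrable f (Measure.dirac a) := by
  refine ⟨hf.aestronglyMeasurable, ?_⟩
  rw [HasFiniteIntegral, lintegral_dirac]
  exact ENNReal.coe_lt_top

lemma integral_three {f : E3 → ℝ} (hf : Continuous f) (a b c : E3) :
    ∫ r, f r ∂((3 : ℝ≥0∞)⁻¹ • (Measure.dirac a + Measure.dirac b + Measure.dirac c))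
      = (f a + f b + f c) / 3 := by
  rw [integral_smul_measure, integral_add_measure
      ((integrable_dirac'' hf a).add_measure (integrable_dirac'' hf b)) (integrable_dirac'' hf c),
    integral_add_measure (integrable_dirac'' hf a) (integrable_dirac'' hf b),
    integral_dirac, integral_dirac, integral_dirac]
  simp [ENNReal.toReal_inv]
  ring

def v0 : E3 := (WithLp.equiv 2 (Fin 3 → ℝ)).symm (fun _ => (Real.sqrt 3)⁻¹)

lemma v0_apply (i : Fin 3) : v0 i = (Real.sqrt 3)⁻¹ := rfl

lemma sq_inv_sqrt3 : ((Real.sqrt 3)⁻¹) ^ 2 = 3⁻¹ := by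
  rw [inv_pow, Real.sq_sqrt (by norm_num : (3:ℝ) ≥ 0)]

lemma v0_mem : v0 ∈ unitSphere := by
  simp only [unitSphere, Metric.mem_sphere, dist_zero_right]
  rw [EuclideanSpace.norm_eq]
  simp [Fin.sum_univ_three, v0_apply, sq_inv_sqrt3]

lemma main (C : ℝ) (hC : C ∈ Set.Icc (0 : ℝ) 1) :
    g C ((3 : ℝ≥0∞)⁻¹ • (Measure.dirac (EuclideanSpace.single (0 : Fin 3) (1 : ℝ))
        + Measure.dirac (EuclideanSpace.single (1 : Fin 3) (1 : ℝ))
        + Measure.dirac (EuclideanSpace.single (2 : Fin 3) (1 : ℝ))))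
      = Real.sqrt ((1 + 2 * C ^ 2) / 3) := by
  obtain ⟨hC0, hC1⟩ := hC
  have hC2 : 1 - C ^ 2 ≥ 0 := by nlinarith
  set B : ℝ := (1 + 2 * C ^ 2) / 3 with hB
  have hBpos : 0 < B := by positivity
  have hsB : Real.sqrt B ^ 2 = B := Real.sq_sqrt hBpos.le
  have hsBpos : 0 < Real.sqrt B := Real.sqrt_pos.2 hBpos
  have hcont : ∀ w : E3, Continuous fun r : E3 =>
      Real.sqrt (C ^ 2 + (1 - C ^ 2) * (inner ℝ r w : ℝ) ^ 2) := by
    intro w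
    exact (continuous_const.add (continuous_const.mul
      ((continuous_id.inner continuous_const).pow 2))).sqrt
  have hval : ∀ w : E3, w ∈ unitSphere →
      (∫ r, Real.sqrt (C ^ 2 + (1 - C ^ 2) * (inner ℝ r w : ℝ) ^ 2)
        ∂((3 : ℝ≥0∞)⁻¹ • (Measure.dirac (EuclideanSpace.single (0 : Fin 3) (1 : ℝ))
        + Measure.dirac (EuclideanSpace.single (1 : Fin 3) (1 : ℝ))
        + Measure.dirac (EuclideanSpace.single (2 : Fin 3) (1 : ℝ)))))
      = (Real.sqrt (C ^ 2 + (1 - C ^ 2) * w 0 ^ 2)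
        + Real.sqrt (C ^ 2 + (1 - C ^ 2) * w 1 ^ 2)
        + Real.sqrt (C ^ 2 + (1 - C ^ 2) * w 2 ^ 2)) / 3 := by
    intro w hw
    rw [integral_three (hcont w)]
    congr 2 <;> rw [real_inner_comm] <;>
      simp [EuclideanSpace.inner_single_left, EuclideanSpace.inner_single_right]
  have hnorm : ∀ w : E3, w ∈ unitSphere → w 0 ^ 2 + w 1 ^ 2 + w 2 ^ 2 = 1 := by
    intro w hw
    simp only [unitSphere, Metric.mem_sphere, dist_zero_right] at hw
    have h := congrArg (· ^ 2) hw
    simp only [EuclideanSpace.norm_eq] at h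
    rw [Real.sq_sqrt (by positivity), one_pow] at h
    simpa [Fin.sum_univ_three, Real.norm_eq_abs, sq_abs] using h
  have hub : ∀ w : E3, w ∈ unitSphere →
      (Real.sqrt (C ^ 2 + (1 - C ^ 2) * w 0 ^ 2)
        + Real.sqrt (C ^ 2 + (1 - C ^ 2) * w 1 ^ 2)
        + Real.sqrt (C ^ 2 + (1 - C ^ 2) * w 2 ^ 2)) / 3 ≤ Real.sqrt B := by
    intro w hw
    set x0 := Real.sqrt (C ^ 2 + (1 - C ^ 2) * w 0 ^ 2)
    set x1 := Real.sqrt (C ^ 2 + (1 - C ^ 2) * w 1 ^ 2)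
    set x2 := Real.sqrt (C ^ 2 + (1 - C ^ 2) * w 2 ^ 2)
    have h0 : x0 ^ 2 = C ^ 2 + (1 - C ^ 2) * w 0 ^ 2 := Real.sq_sqrt (by positivity)
    have h1 : x1 ^ 2 = C ^ 2 + (1 - C ^ 2) * w 1 ^ 2 := Real.sq_sqrt (by positivity)
    have h2 : x2 ^ 2 = C ^ 2 + (1 - C ^ 2) * w 2 ^ 2 := Real.sq_sqrt (by positivity)
    have hsum : x0 ^ 2 + x1 ^ 2 + x2 ^ 2 = 3 * B := by
      rw [h0, h1, h2, hB]
      have := hnorm w hw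
      ring_nf
      nlinarith [hnorm w hw]
    rw [div_le_iff₀ (by norm_num : (0:ℝ) < 3)]
    nlinarith [sq_nonneg (x0 - Real.sqrt B), sq_nonneg (x1 - Real.sqrt B),
      sq_nonneg (x2 - Real.sqrt B), hsBpos, hsum]
  have hv0val :
      (Real.sqrt (C ^ 2 + (1 - C ^ 2) * v0 0 ^ 2)
        + Real.sqrt (C ^ 2 + (1 - C ^ 2) * v0 1 ^ 2)
        + Real.sqrt (C ^ 2 + (1 - C ^ 2) * v0 2 ^ 2)) / 3 = Real.sqrt B := by
    have : C ^ 2 + (1 - C ^ 2) * ((Real.sqrt 3)⁻¹) ^ 2 = B := by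
      rw [sq_inv_sqrt3, hB]; ring
    simp only [v0_apply, this]
    ring
  haveI : Nonempty unitSphere := ⟨⟨v0, v0_mem⟩⟩
  rw [g]
  apply le_antisymm
  · apply ciSup_le
    intro v
    rw [hval v v.2]
    exact hub v v.2
  · refine le_ciSup_of_le ⟨Real.sqrt B, ?_⟩ ⟨v0, v0_mem⟩ ?_
    · rintro x ⟨v, rfl⟩
      dsimp only
      rw [hval v v.2]
      exact hub v v.2
    · dsimp only
      rw [hval v0 v0_mem, hv0val]

/-- Let `μ` be the uniform distribution on the three standard basis vectors of ℝ³.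
Then for every `C ∈ [0,1]`, `g(C,μ) = √((1+2C²)/3)`; in particular
`g*(μ) = g(0,μ) = 1/√3`. -/
theorem g_XYZ (C : ℝ) (hC : C ∈ Set.Icc (0 : ℝ) 1) :
    g C ((3 : ℝ≥0∞)⁻¹ • (Measure.dirac (EuclideanSpace.single (0 : Fin 3) (1 : ℝ))
        + Measure.dirac (EuclideanSpace.single (1 : Fin 3) (1 : ℝ))
        + Measure.dirac (EuclideanSpace.single (2 : Fin 3) (1 : ℝ))))
      = Real.sqrt ((1 + 2 * C ^ 2) / 3) ∧
    g 0 ((3 : ℝ≥0∞)⁻¹ • (Measure.dirac (EuclideanSpace.single (0 : Fin 3) (1 : ℝ))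
        + Measure.dirac (EuclideanSpace.single (1 : Fin 3) (1 : ℝ))
        + Measure.dirac (EuclideanSpace.single (2 : Fin 3) (1 : ℝ))))
      = 1 / Real.sqrt 3 := by
  refine ⟨main C hC, ?_⟩
  have h0 := main 0 ⟨le_refl 0, zero_le_one⟩
  rw [h0]
  norm_num
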